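/- There exists a constant C > 0 such that for every integer N ≥ 2 and every real ε with 0 < ε < 1, Σ_{k ∈ ℤ, −N ≤ k ≤ N, |k+1/2| ≤ √ε·N} arsinh( εN / |k + 1/2| ) ≤ C·( ln N + √ε·N + √ε·ln(1/ε)·N + 1 ), where arsinh(y) = ln( y + √(y² + 1) ) is the inverse hyperbolic sine. -/

import Mathlib

open Finset
set_option maxHeartbeats 1000000

lemma arsinh_le_log (y : ℝ) (hy : 0 ≤ y) : Real.arsinh y ≤ Real.log (2 * (y + 1)) := by
  rw [Real.arsinh]
  apply Real.log_le_log (by positivity)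
  have h : Real.sqrt (1 + y ^ 2) ≤ 1 + y := by
    rw [show (1:ℝ) + y = Real.sqrt ((1+y)^2) by rw [Real.sqrt_sq (by linarith)]]
    exact Real.sqrt_le_sqrt (by nlinarith)
  linarith

lemma pow_le_factorial_mul_exp (n : ℕ) : (n : ℝ) ^ n ≤ (n.factorial : ℝ) * Real.exp n := by
  induction n with
  | zero => simp
  | succ n ih =>
    have h1 : ((n:ℝ) + 1) ^ n ≤ (n:ℝ) ^ n * Real.exp 1 := by
      rcases Nat.eq_zero_or_pos n with h | h
      · subst h; simpa using (Real.exp_pos 1).le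
      have hn : (0:ℝ) < n := by exact_mod_cast h
      have h2 : (n:ℝ) + 1 ≤ (n:ℝ) * Real.exp (1 / n) := by
        have := Real.add_one_le_exp (1 / (n:ℝ))
        calc (n:ℝ) + 1 = (n:ℝ) * (1/(n:ℝ) + 1) := by field_simp; ring
        _ ≤ (n:ℝ) * Real.exp (1/(n:ℝ)) := mul_le_mul_of_nonneg_left (by linarith) hn.le
      calc ((n:ℝ) + 1) ^ n ≤ ((n:ℝ) * Real.exp (1/(n:ℝ))) ^ n :=
            pow_le_pow_left₀ (by positivity) h2 n
      _ = (n:ℝ)^n * (Real.exp (1/(n:ℝ)))^n := mul_pow _ _ _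
      _ = (n:ℝ)^n * Real.exp 1 := by
          rw [← Real.exp_nat_mul]; congr 1; field_simp
    calc ((n+1 : ℕ) : ℝ) ^ (n+1) = ((n:ℝ)+1) * ((n:ℝ)+1)^n := by push_cast; ring
    _ ≤ ((n:ℝ)+1) * ((n:ℝ)^n * Real.exp 1) :=
        mul_le_mul_of_nonneg_left h1 (by positivity)
    _ = (((n:ℝ)+1) * Real.exp 1) * (n:ℝ)^n := by ring
    _ ≤ (((n:ℝ)+1) * Real.exp 1) * ((n.factorial : ℝ) * Real.exp n) :=
        mul_le_mul_of_nonneg_left ih (by positivity)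
    _ = ((n+1:ℕ).factorial : ℝ) * Real.exp (((n+1:ℕ)):ℝ) := by
        push_cast [Nat.factorial_succ, Real.exp_add]; ring

lemma mul_log_sub_le_log_factorial (n : ℕ) :
    (n:ℝ) * Real.log n - n ≤ Real.log (n.factorial : ℝ) := by
  rcases Nat.eq_zero_or_pos n with h | h
  · subst h; simp
  have h1 := Real.log_le_log (by positivity) (pow_le_factorial_mul_exp n)
  rw [Real.log_mul (by exact_mod_cast (Nat.factorial_pos n).ne') (Real.exp_ne_zero _),
    Real.log_exp, Real.log_pow] at h1
  linarith

lemma log_factorial_eq (n : ℕ) :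
    Real.log (n.factorial : ℝ) = ∑ i ∈ Finset.Icc 1 n, Real.log i := by
  induction n with
  | zero => simp
  | succ n ih =>
    rw [Finset.sum_Icc_succ_top (by omega), ← ih, Nat.factorial_succ]
    push_cast
    rw [Real.log_mul (by positivity) (by exact_mod_cast (Nat.factorial_pos n).ne')]
    ring


theorem stmt_8 :
    ∃ C : ℝ, 0 < C ∧ ∀ N : ℕ, 2 ≤ N → ∀ ε : ℝ, 0 < ε → ε < 1 →
      ∑ k ∈ (Finset.Icc (-(N : ℤ)) (N : ℤ)).filter
          (fun k : ℤ => |(k : ℝ) + 1 / 2| ≤ Real.sqrt ε * (N : ℝ)),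
        Real.arsinh (ε * (N : ℝ) / |(k : ℝ) + 1 / 2|) ≤
      C * (Real.log N + Real.sqrt ε * (N : ℝ) +
        Real.sqrt ε * Real.log (1 / ε) * (N : ℝ) + 1) := by
  refine ⟨8, by norm_num, ?_⟩
  intro N hN ε hε hε1
  set s := Real.sqrt ε with hs_def
  have hs : 0 < s := Real.sqrt_pos.mpr hε
  have hs1 : s ≤ 1 := by
    rw [hs_def, show (1:ℝ) = Real.sqrt 1 by simp]
    exact Real.sqrt_le_sqrt hε1.le
  have hN0 : (0:ℝ) < N := by positivity
  have hN1 : (1:ℝ) ≤ N := by exact_mod_cast Nat.one_le_of_lt hN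
  have hsN : 0 < s * N := by positivity
  have hεs : ε = s * s := (Real.mul_self_sqrt hε.le).symm
  have habs : ∀ k : ℤ, (1:ℝ)/2 ≤ |(k:ℝ) + 1/2| := by
    intro k
    rcases le_or_gt 0 k with h | h
    · have h' : (0:ℝ) ≤ k := by exact_mod_cast h
      rw [abs_of_nonneg (by linarith)]; linarith
    · have h' : (k:ℝ) ≤ -1 := by exact_mod_cast (by omega : k ≤ -1)
      rw [abs_of_nonpos (by linarith)]; linarith
  set S := (Finset.Icc (-(N : ℤ)) (N : ℤ)).filter
      (fun k : ℤ => |(k : ℝ) + 1 / 2| ≤ s * (N : ℝ)) with hS_def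
  have hlogN : 0 ≤ Real.log N := Real.log_nonneg hN1
  have hlogε : 0 ≤ Real.log (1/ε) :=
    Real.log_nonneg (by rw [le_div_iff₀ hε]; linarith)
  have hrhs : 0 ≤ s * Real.log (1/ε) * N := by positivity
  have key : ∀ k : ℤ, |(k:ℝ)+1/2| ≤ s*N →
      Real.arsinh (ε*(N:ℝ)/|(k:ℝ)+1/2|) ≤
        2*Real.log 2 + Real.log (s*N) - Real.log |(k:ℝ)+1/2| := by
    intro k hjle
    have hj := habs k
    set j := |(k:ℝ)+1/2| with hj_def
    have hj0 : 0 < j := by linarith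
    have h1 := arsinh_le_log (ε*(N:ℝ)/j) (by positivity)
    have h2 : 2*(ε*(N:ℝ)/j + 1) = 2*(ε*N + j)/j := by field_simp
    rw [h2, Real.log_div (by positivity) hj0.ne'] at h1
    have h4 : Real.log (2*(ε*N+j)) ≤ Real.log (4*(s*N)) := by
      apply Real.log_le_log (by positivity)
      have : ε*N ≤ s*N := by nlinarith
      linarith
    have h5 : Real.log (4*(s*N)) = 2*Real.log 2 + Real.log (s*N) := by
      rw [show (4:ℝ)*(s*N) = 2*(2*(s*N)) by ring,
        Real.log_mul (by norm_num) (by positivity),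
        Real.log_mul (by norm_num) (by positivity)]
      ring
    linarith
  rcases lt_or_ge (s*N) 1 with hcase | hcase
  · -- small case: S ⊆ {-1, 0}, each term ≤ 2
    have hsub : S ⊆ ({-1, 0} : Finset ℤ) := by
      intro k hk
      simp only [hS_def, Finset.mem_filter] at hk
      have h1 : |(k:ℝ)+1/2| ≤ s*N := hk.2
      have h2 : |(k:ℝ)+1/2| < 1 := lt_of_le_of_lt h1 hcase
      rw [abs_lt] at h2
      have h3 : -2 < (k:ℝ) ∧ (k:ℝ) < 1 := ⟨by linarith, by linarith⟩
      have hk1 : -2 < k := by exact_mod_cast h3.1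
      have hk2 : k < 1 := by exact_mod_cast h3.2
      simp only [Finset.mem_insert, Finset.mem_singleton]
      omega
    have hterm : ∀ k ∈ S, Real.arsinh (ε*(N:ℝ)/|(k:ℝ)+1/2|) ≤ 2 := by
      intro k hk
      simp only [hS_def, Finset.mem_filter] at hk
      have hj := habs k
      have hj0 : (0:ℝ) < |(k:ℝ)+1/2| := by linarith
      have harg : ε*(N:ℝ)/|(k:ℝ)+1/2| ≤ 2 := by
        rw [div_le_iff₀ hj0]
        nlinarith
      have h1 := arsinh_le_log (ε*(N:ℝ)/|(k:ℝ)+1/2|) (by positivity)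
      have h2 : Real.log (2*(ε*(N:ℝ)/|(k:ℝ)+1/2| + 1)) ≤ Real.log 6 :=
        Real.log_le_log (by positivity) (by linarith)
      have h3 : Real.log 6 ≤ 2 := by
        rw [show (2:ℝ) = Real.log (Real.exp 2) by rw [Real.log_exp]]
        apply Real.log_le_log (by norm_num)
        have he := Real.exp_one_gt_d9
        have hee : Real.exp 2 = Real.exp 1 * Real.exp 1 := by
          rw [← Real.exp_add]; norm_num
        nlinarith
      linarith
    calc ∑ k ∈ S, Real.arsinh (ε*(N:ℝ)/|(k:ℝ)+1/2|)
        ≤ ∑ k ∈ S, (2:ℝ) := Finset.sum_le_sum hterm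
      _ = (S.card : ℝ) * 2 := by rw [Finset.sum_const]; ring
      _ ≤ 2 * 2 := by
          have hc := Finset.card_le_card hsub
          have h2 : ({-1, 0} : Finset ℤ).card ≤ 2 := by decide
          have h3 : (S.card : ℝ) ≤ 2 := by exact_mod_cast le_trans hc h2
          linarith
      _ ≤ 8 * (Real.log N + s * N + s * Real.log (1/ε) * N + 1) := by nlinarith
  · -- main case : s*N ≥ 1
    set M := ⌊s*N + 1/2⌋₊ with hM_def
    have hMle : (M:ℝ) ≤ s*N + 1/2 := Nat.floor_le (by positivity)
    have hMge : s*N - 1/2 ≤ (M:ℝ) := by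
      have := Nat.lt_floor_add_one (s*N + 1/2)
      linarith
    have hM1 : 1 ≤ M := by
      apply Nat.le_floor
      push_cast
      linarith
    have hM0 : (0:ℝ) < M := by
      have h : (1:ℝ) ≤ (M:ℝ) := by exact_mod_cast hM1
      linarith
    have hM2 : s*N ≤ 2*M := by linarith
    have hM3 : (M:ℝ) ≤ 2*(s*N) := by linarith
    have hMlog : Real.log (s*N) ≤ Real.log 2 + Real.log M := by
      rw [← Real.log_mul (by norm_num) hM0.ne']
      exact Real.log_le_log hsN hM2
    have hMlog2 : Real.log M ≤ Real.log 2 + Real.log (s*N) := by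
      rw [← Real.log_mul (by norm_num) hsN.ne']
      exact Real.log_le_log hM0 hM3
    set G : ℤ → ℝ := fun k =>
      3*Real.log 2 + Real.log (s*N) - Real.log (if 0 ≤ k then (k:ℝ)+1 else -(k:ℝ))
      with hG_def
    have hterm : ∀ k ∈ S, Real.arsinh (ε*(N:ℝ)/|(k:ℝ)+1/2|) ≤ G k := by
      intro k hk
      simp only [hS_def, Finset.mem_filter] at hk
      have h1 := key k hk.2
      have h2 : Real.log (if 0 ≤ k then (k:ℝ)+1 else -(k:ℝ)) - Real.log 2
          ≤ Real.log |(k:ℝ)+1/2| := by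
        rcases le_or_gt 0 k with h | h
        · have h' : (0:ℝ) ≤ k := by exact_mod_cast h
          rw [if_pos h, abs_of_nonneg (by linarith),
            ← Real.log_div (by linarith) (by norm_num)]
          apply Real.log_le_log (by linarith)
          linarith
        · have h' : (k:ℝ) ≤ -1 := by exact_mod_cast (by omega : k ≤ -1)
          rw [if_neg (not_le.mpr h), abs_of_nonpos (by linarith),
            ← Real.log_div (by linarith) (by norm_num)]
          apply Real.log_le_log (by linarith)
          linarith
      simp only [hG_def]
      linarith
    set T := ((Finset.Icc 1 M).image (fun i : ℕ => (i:ℤ) - 1)) ∪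
        ((Finset.Icc 1 M).image (fun i : ℕ => -(i:ℤ))) with hT_def
    have hsub : S ⊆ T := by
      intro k hk
      simp only [hS_def, Finset.mem_filter, Finset.mem_Icc] at hk
      obtain ⟨⟨hk1, hk2⟩, hk3⟩ := hk
      simp only [hT_def, Finset.mem_union, Finset.mem_image, Finset.mem_Icc]
      rcases le_or_gt 0 k with h | h
      · left
        refine ⟨k.toNat + 1, ⟨by omega, ?_⟩, by omega⟩
        have h' : (0:ℝ) ≤ k := by exact_mod_cast h
        rw [abs_of_nonneg (by linarith)] at hk3
        apply Nat.le_floor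
        have hc : ((k.toNat : ℕ) : ℝ) = (k:ℝ) := by
          exact_mod_cast congrArg (fun z : ℤ => (z:ℝ)) (Int.toNat_of_nonneg h)
        push_cast
        rw [hc]
        linarith
      · right
        refine ⟨(-k).toNat, ⟨by omega, ?_⟩, by omega⟩
        have h' : (k:ℝ) ≤ -1 := by exact_mod_cast (by omega : k ≤ -1)
        rw [abs_of_nonpos (by linarith)] at hk3
        apply Nat.le_floor
        have hc : (((-k).toNat : ℕ) : ℝ) = -(k:ℝ) := by
          exact_mod_cast congrArg (fun z : ℤ => (z:ℝ))
            (Int.toNat_of_nonneg (by omega : (0:ℤ) ≤ -k))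
        push_cast
        rw [hc]
        linarith
    have hGnonneg : ∀ k ∈ T, 0 ≤ G k := by
      intro k hk
      simp only [hT_def, Finset.mem_union, Finset.mem_image, Finset.mem_Icc] at hk
      have hik : ∃ i : ℕ, 1 ≤ i ∧ i ≤ M ∧
          (if 0 ≤ k then (k:ℝ)+1 else -(k:ℝ)) = i := by
        rcases hk with ⟨i, ⟨hi1, hi2⟩, rfl⟩ | ⟨i, ⟨hi1, hi2⟩, rfl⟩
        · exact ⟨i, hi1, hi2, by rw [if_pos (by omega)]; push_cast; ring⟩
        · exact ⟨i, hi1, hi2, by rw [if_neg (by omega)]; push_cast; ring⟩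
      obtain ⟨i, hi1, hi2, hieq⟩ := hik
      have hi1' : (1:ℝ) ≤ i := by exact_mod_cast hi1
      have hi2' : (i:ℝ) ≤ M := by exact_mod_cast hi2
      have h5 : Real.log (if 0 ≤ k then (k:ℝ)+1 else -(k:ℝ)) ≤ Real.log M := by
        rw [hieq]; exact Real.log_le_log (by linarith) hi2'
      simp only [hG_def]
      have hl2 : 0 ≤ Real.log 2 := Real.log_nonneg (by norm_num)
      linarith [hMlog2]
    have hdisj : Disjoint ((Finset.Icc 1 M).image (fun i : ℕ => (i:ℤ) - 1))
        ((Finset.Icc 1 M).image (fun i : ℕ => -(i:ℤ))) := by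
      rw [Finset.disjoint_left]
      intro k h1 h2
      simp only [Finset.mem_image, Finset.mem_Icc] at h1 h2
      obtain ⟨i, ⟨hi1, _⟩, rfl⟩ := h1
      obtain ⟨i', ⟨hi'1, _⟩, heq⟩ := h2
      omega
    have hsum1 : ∑ k ∈ (Finset.Icc 1 M).image (fun i : ℕ => (i:ℤ) - 1), G k
        = ∑ i ∈ Finset.Icc 1 M, (3*Real.log 2 + Real.log (s*N) - Real.log i) := by
      rw [Finset.sum_image (by intro a _ b _ h; simp only at h; omega)]
      apply Finset.sum_congr rfl
      intro i hi
      simp only [Finset.mem_Icc] at hi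
      simp only [hG_def]
      rw [if_pos (by omega)]
      push_cast
      ring_nf
    have hsum2 : ∑ k ∈ (Finset.Icc 1 M).image (fun i : ℕ => -(i:ℤ)), G k
        = ∑ i ∈ Finset.Icc 1 M, (3*Real.log 2 + Real.log (s*N) - Real.log i) := by
      rw [Finset.sum_image (by intro a _ b _ h; simp only at h; omega)]
      apply Finset.sum_congr rfl
      intro i hi
      simp only [Finset.mem_Icc] at hi
      simp only [hG_def]
      rw [if_neg (by omega)]
      push_cast
      ring_nf
    have hSig0 : ∑ i ∈ Finset.Icc 1 M, (3*Real.log 2 + Real.log (s*N) - Real.log i)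
        = (M:ℝ) * (3*Real.log 2 + Real.log (s*N)) - Real.log (M.factorial) := by
      rw [Finset.sum_sub_distrib, Finset.sum_const, log_factorial_eq, Nat.card_Icc]
      simp
      ring
    have hstir := mul_log_sub_le_log_factorial M
    have hSig0le : ∑ i ∈ Finset.Icc 1 M, (3*Real.log 2 + Real.log (s*N) - Real.log i)
        ≤ 4 * M := by
      rw [hSig0]
      have hlog2 : Real.log 2 < 0.6931471808 := Real.log_two_lt_d9
      have hlog2' : 0 ≤ Real.log 2 := Real.log_nonneg (by norm_num)
      nlinarith [hM0]
    calc ∑ k ∈ S, Real.arsinh (ε*(N:ℝ)/|(k:ℝ)+1/2|)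
        ≤ ∑ k ∈ S, G k := Finset.sum_le_sum hterm
      _ ≤ ∑ k ∈ T, G k := Finset.sum_le_sum_of_subset_of_nonneg hsub
          (fun k hk _ => hGnonneg k hk)
      _ ≤ 8 * M := by
          rw [hT_def, Finset.sum_union hdisj, hsum1, hsum2]
          linarith [hSig0le]
      _ ≤ 8 * (Real.log N + s * N + s * Real.log (1/ε) * N + 1) := by linarith
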